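/- Let q ≡ 2 (mod 3) be a prime power, k = F_{q^2}, K = k(u), t = u^q − u, and E the elliptic curve Y^2 + tY = X^3 over K. Then the point P = (u^{(q+1)/3}, u) lies on E(K), and for each cube root of unity ζ ∈ k and α ∈ F_q, the point P_{i,α} = (ζ^i (u+α)^{(q+1)/3}, u+α) lies on E(K). Moreover for each fixed α, the sum P_{0,α} + P_{1,α} + P_{2,α} = 0 in the group E(K). -/

import Mathlib

open WeierstrassCurve.Affine WeierstrassCurve.Affine.Point

open Classical in
/-- Let `q ≡ 2 (mod 3)` be a prime power, `k = F_{q²}`, `K = k(u)`, `t = u^q − u`, and `E`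
the elliptic curve `Y² + tY = X³` over `K`. Then for every cube root of unity `ζ ∈ k` and
every `α ∈ F_q` (i.e. `α^q = α`), the point
`P_{i,α} = (ζ^i (u+α)^{(q+1)/3}, u+α)` lies on `E(K)`; moreover for `ζ` a primitive cube
root of unity and each fixed `α`, `P_{0,α} + P_{1,α} + P_{2,α} = 0` in the group `E(K)`. -/
theorem stmt17 (p n q : ℕ) (hp : p.Prime) (hn : 0 < n) (hq : q = p ^ n) (hq3 : q % 3 = 2)
    (k : Type) [Field k] [Fintype k] (hk : Fintype.card k = q ^ 2) :
    let u : RatFunc k := RatFunc.X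
    let t : RatFunc k := u ^ q - u
    let W : WeierstrassCurve.Affine (RatFunc k) := ⟨0, 0, t, 0, 0⟩
    (∀ ζ : k, ζ ^ 3 = 1 → ∀ (i : ℕ) (α : k), α ^ q = α →
      W.Equation ((RatFunc.C ζ) ^ i * (u + RatFunc.C α) ^ ((q + 1) / 3))
        (u + RatFunc.C α)) ∧
    (∀ ζ : k, IsPrimitiveRoot ζ 3 → ∀ α : k, α ^ q = α →
      ∀ (h0 : W.Nonsingular ((RatFunc.C ζ) ^ 0 * (u + RatFunc.C α) ^ ((q + 1) / 3))
          (u + RatFunc.C α))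
        (h1 : W.Nonsingular ((RatFunc.C ζ) ^ 1 * (u + RatFunc.C α) ^ ((q + 1) / 3))
          (u + RatFunc.C α))
        (h2 : W.Nonsingular ((RatFunc.C ζ) ^ 2 * (u + RatFunc.C α) ^ ((q + 1) / 3))
          (u + RatFunc.C α)),
        WeierstrassCurve.Affine.Point.some _ _ h0 + WeierstrassCurve.Affine.Point.some _ _ h1 +
          WeierstrassCurve.Affine.Point.some _ _ h2 = 0) := by
  intro u t W
  -- characteristic of k is p
  haveI hfp : Fact p.Prime := ⟨hp⟩
  haveI : CharP k (ringChar k) := ringChar.charP k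
  have hrp : ringChar k = p := by
    obtain ⟨m, hrprime, hcard⟩ := FiniteField.card k (ringChar k)
    rw [hk, hq, ← pow_mul] at hcard
    have : ringChar k ∣ p := by
      have h1 : ringChar k ∣ p ^ (n * 2) := hcard ▸ dvd_pow_self _ (by positivity)
      exact hrprime.dvd_of_dvd_pow h1
    exact ((Nat.prime_dvd_prime_iff_eq hrprime hp).mp this)
  haveI hck : CharP k p := hrp ▸ ringChar.charP k
  haveI hcK : CharP (RatFunc k) p :=
    charP_of_injective_ringHom (RatFunc.C : k →+* RatFunc k).injective p
  have h3q : 3 * ((q + 1) / 3) = q + 1 := Nat.mul_div_cancel' (by omega)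
  -- Frobenius on v
  have hfrob : ∀ α : k, α ^ q = α → t = (u + RatFunc.C α) ^ q - (u + RatFunc.C α) := by
    intro α hα
    have : (u + RatFunc.C α) ^ q = u ^ q + RatFunc.C α := by
      rw [hq, add_pow_char_pow, ← hq, ← map_pow, hα]
    rw [this]; ring
  -- the equation
  have heq : ∀ ζ : k, ζ ^ 3 = 1 → ∀ (i : ℕ) (α : k), α ^ q = α →
      W.Equation ((RatFunc.C ζ) ^ i * (u + RatFunc.C α) ^ ((q + 1) / 3))
        (u + RatFunc.C α) := by
    intro ζ hζ i α hα
    rw [equation_iff]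
    show (u + RatFunc.C α) ^ 2 + 0 * _ * _ + t * _ = _ ^ 3 + 0 * _ ^ 2 + 0 * _ + 0
    have hx3 : ((RatFunc.C ζ) ^ i * (u + RatFunc.C α) ^ ((q + 1) / 3)) ^ 3
        = (u + RatFunc.C α) ^ q * (u + RatFunc.C α) := by
      rw [mul_pow, ← pow_mul, ← pow_mul, mul_comm ((q+1)/3) 3, h3q, pow_succ,
        mul_comm i 3, pow_mul, ← map_pow, hζ, map_one, one_pow, one_mul]
    rw [hx3, hfrob α hα]
    ring
  refine ⟨heq, ?_⟩
  intro ζ hζ α hα h0 h1 h2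
  set v : RatFunc k := u + RatFunc.C α with hv
  set x₀ : RatFunc k := v ^ ((q + 1) / 3) with hx₀
  have hv0 : v ≠ 0 := by
    show RatFunc.X + RatFunc.C α ≠ 0
    rw [← RatFunc.algebraMap_X, ← RatFunc.algebraMap_C, ← map_add]
    exact RatFunc.algebraMap_ne_zero (Polynomial.X_add_C_ne_zero α)
  have hx00 : x₀ ≠ 0 := pow_ne_zero _ hv0
  have hζ1 : ζ ≠ 1 := hζ.ne_one (by norm_num)
  have hsk : ζ ^ 2 + ζ + 1 = 0 := by
    have h3 : ζ ^ 3 = 1 := hζ.pow_eq_one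
    have : (ζ - 1) * (ζ ^ 2 + ζ + 1) = 0 := by linear_combination h3
    rcases mul_eq_zero.mp this with h | h
    · exact absurd (sub_eq_zero.mp h) hζ1
    · exact h
  have hsum : (RatFunc.C ζ) ^ 2 + RatFunc.C ζ + 1 = 0 := by
    have := congrArg (RatFunc.C (K := k)) hsk
    simpa [map_add, map_pow] using this
  have hCζ1 : (RatFunc.C ζ : RatFunc k) ≠ 1 := fun h => hζ1 <| by
    have := congrArg id h
    exact (RatFunc.C : k →+* RatFunc k).injective (by rw [map_one]; exact h)
  have hx01 : (RatFunc.C ζ) ^ 0 * x₀ ≠ (RatFunc.C ζ) ^ 1 * x₀ := by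
    intro h
    rw [pow_zero, pow_one] at h
    exact hCζ1 (mul_right_cancel₀ hx00 h).symm
  rw [add_of_X_ne hx01]
  have hslope : W.slope ((RatFunc.C ζ) ^ 0 * x₀) ((RatFunc.C ζ) ^ 1 * x₀) v v = 0 := by
    rw [slope_of_X_ne hx01, sub_self, zero_div]
  apply add_of_Y_eq
  · rw [hslope]
    show (0:RatFunc k) ^ 2 + 0 * 0 - 0 - _ - _ = _
    linear_combination (-x₀) * hsum
  · rw [hslope]
    show W.negY _ (0 * (W.addX _ _ 0 - _) + v) = W.negY _ v
    show -(0 * (W.addX _ _ 0 - _) + v) - 0 * _ - t = -v - 0 * _ - t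
    ring
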